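/- For every matrix D : Fin m → Fin m → ℕ with D j k = D k j and D j j = 0 for all j, k, there exists a matrix D' : Fin m → Fin m → ℕ such that D' j k + D' k j = D j k for all j, k, and for every j: ⌊(Σ_k D j k)/2⌋ ≤ Σ_k D' j k ≤ ⌈(Σ_k D j k)/2⌉, and for every k: ⌊(Σ_j D j k)/2⌋ ≤ Σ_j D' j k ≤ ⌈(Σ_j D j k)/2⌉. (That is, every symmetric demand of a bidirectional Clos network can be split into a directed demand whose every row sum and every column sum is within the floor and ceiling of half the corresponding sum of D.) -/

import Mathlib

namespace Stmt6Aux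

open Finset

variable {m : ℕ}

lemma sum_count_fst {α : Type*} [Fintype α] [DecidableEq α] (L : List (α × α)) (a : α) :
    ∑ b, L.count (a, b) = (L.map Prod.fst).count a := by
  induction L with
  | nil => simp
  | cons p L ih =>
    simp only [List.count_cons, List.map_cons, Finset.sum_add_distrib, ih]
    congr 1
    rcases p with ⟨c, d⟩
    simp only [beq_iff_eq, Prod.mk.injEq]
    by_cases h : c = a
    · subst h; simp
    · simp [h, Ne.symm h]

lemma sum_count_snd {α : Type*} [Fintype α] [DecidableEq α] (L : List (α × α)) (b : α) :
    ∑ a, L.count (a, b) = (L.map Prod.snd).count b := by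
  induction L with
  | nil => simp
  | cons p L ih =>
    simp only [List.count_cons, List.map_cons, Finset.sum_add_distrib, ih]
    congr 1
    rcases p with ⟨c, d⟩
    simp only [beq_iff_eq, Prod.mk.injEq]
    by_cases h : d = b
    · subst h; simp
    · simp [h, Ne.symm h]

lemma sum_count_length {α : Type*} [Fintype α] [DecidableEq α] (L : List α) :
    ∑ a, L.count a = L.length := by
  induction L with
  | nil => simp
  | cons x L ih =>
    simp only [List.count_cons, List.length_cons, Finset.sum_add_distrib, ih]
    simp

lemma count_le_one' {α : Type*} [BEq α] [LawfulBEq α] {L : List α} (h : L.Nodup) (a : α) :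
    L.count a ≤ 1 := by
  induction L with
  | nil => simp
  | cons x L ih =>
    rw [List.count_cons]
    rcases List.nodup_cons.1 h with ⟨hx, hL⟩
    by_cases hxa : (x == a) = true
    · have hq : x = a := eq_of_beq hxa
      subst hq
      rw [List.count_eq_zero.2 hx]
      simp [hxa]
    · simpa [hxa] using ih hL

lemma countF_le (D : Fin m → Fin m → ℕ) (hs : ∀ j k, D j k = D k j)
    (hone : ∀ a b, D a b ≤ 1) (L : List (Fin m × Fin m))
    (hadj : ∀ p ∈ L, 0 < D p.1 p.2)
    (hnd : L.Nodup)
    (hrev : ∀ a b, (a, b) ∈ L → (b, a) ∈ L → False) :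
    ∀ a b, L.count (a, b) + L.count (b, a) ≤ D a b := by
  intro a b
  by_cases hab : 0 < D a b
  · have h1 : L.count (a, b) ≤ 1 := count_le_one' hnd _
    have h2 : L.count (b, a) ≤ 1 := count_le_one' hnd _
    by_cases m1 : (a, b) ∈ L
    · have hm : (b, a) ∉ L := fun m2 => hrev a b m1 m2
      have h3 : L.count (b, a) = 0 := List.count_eq_zero.2 hm
      have := hone a b
      omega
    · have h3 : L.count (a, b) = 0 := List.count_eq_zero.2 m1
      have := hone b a
      have := hs a b
      omega
  · have h1 : (a, b) ∉ L := fun h => hab (hadj _ h)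
    have h2 : (b, a) ∉ L := fun h => by
      have h' := hadj _ h
      simp only at h'
      rw [← hs a b] at h'
      exact hab h'
    have e1 : L.count (a, b) = 0 := List.count_eq_zero.2 h1
    have e2 : L.count (b, a) = 0 := List.count_eq_zero.2 h2
    omega

lemma mem_pathEdges (l : List (Fin m)) (hne : l ≠ []) :
    ∀ p : Fin m × Fin m, p ∈ l.dropLast.zip l.tail →
      ∃ i, ∃ h : i + 1 < l.length, l[i] = p.1 ∧ l[i + 1] = p.2 := by
  intro p hp
  obtain ⟨i, hi, hget⟩ := List.getElem_of_mem hp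
  have hiz : i < l.length - 1 := by
    rw [List.length_zip, List.length_dropLast, List.length_tail] at hi
    omega
  have hlen : i + 1 < l.length := by
    have : 0 < l.length := List.length_pos_iff.2 hne
    omega
  rw [List.getElem_zip] at hget
  refine ⟨i, hlen, ?_, ?_⟩
  · have := congrArg Prod.fst hget
    simpa [List.getElem_dropLast] using this
  · have := congrArg Prod.snd hget
    simpa [List.getElem_tail] using this

/-- The balance-condition conclusion shape shared by path and cycle constructions. -/
def TrailGoal (D : Fin m → Fin m → ℕ) : Prop :=
  ∃ F : Fin m → Fin m → ℕ,
    (∀ j k, F j k + F k j ≤ D j k) ∧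
    (∀ j, (∑ k, F j k = ∑ k, F k j) ∨
      ((∑ k, D j k) % 2 = 1 ∧
        (∑ k, F j k = (∑ k, F k j) + 1 ∨ ∑ k, F k j = (∑ k, F j k) + 1))) ∧
    0 < ∑ j, ∑ k, F j k

lemma pathF (D : Fin m → Fin m → ℕ) (hs : ∀ j k, D j k = D k j)
    (hone : ∀ a b, D a b ≤ 1)
    (l : List (Fin m)) (hne : l ≠ []) (hnd : l.Nodup) (hlen : 2 ≤ l.length)
    (hch : l.Chain' (fun a b => 0 < D a b))
    (hx : ∑ k, D (l.head hne) k = 1) (hy : ∑ k, D (l.getLast hne) k = 1) :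
    TrailGoal D := by
  classical
  set x := l.head hne with hxdef
  set y := l.getLast hne with hydef
  have hxy : x ≠ y := by
    intro h
    rw [hxdef, hydef, List.head_eq_getElem, List.getLast_eq_getElem,
      hnd.getElem_inj_iff] at h
    omega
  set L := l.dropLast.zip l.tail with hLdef
  have hadj : ∀ p ∈ L, 0 < D p.1 p.2 := by
    intro p hp
    obtain ⟨i, hilen, h1, h2⟩ := mem_pathEdges l hne p hp
    have := List.isChain_iff_getElem.1 hch i (by omega)
    rwa [h1, h2] at this
  have hLnd : L.Nodup := by
    apply List.Nodup.of_map Prod.fst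
    rw [List.map_fst_zip (by simp)]
    exact (List.dropLast_sublist l).nodup hnd
  have hrev : ∀ a b, (a, b) ∈ L → (b, a) ∈ L → False := by
    intro a b h1 h2
    obtain ⟨i, hi, hi1, hi2⟩ := mem_pathEdges l hne _ h1
    obtain ⟨j, hj, hj1, hj2⟩ := mem_pathEdges l hne _ h2
    simp only at hi1 hi2 hj1 hj2
    have e1 : l[i] = l[j + 1]'hj := by rw [hi1, hj2]
    have e2 : l[i + 1]'hi = l[j]'(by omega) := by rw [hi2, hj1]
    rw [hnd.getElem_inj_iff] at e1 e2
    omega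
  refine ⟨fun a b => L.count (a, b), countF_le D hs hone L hadj hLnd hrev, ?_, ?_⟩
  · intro j
    have hf : ∑ k, L.count (j, k) = l.dropLast.count j := by
      rw [sum_count_fst, List.map_fst_zip (by simp)]
    have hg : ∑ k, L.count (k, j) = l.tail.count j := by
      rw [sum_count_snd, List.map_snd_zip (by simp)]
    have hA : l.count j = l.dropLast.count j + (if y = j then 1 else 0) := by
      conv_lhs => rw [← List.dropLast_append_getLast hne]
      rw [List.count_append, List.count_singleton']
    have hB : l.count j = l.tail.count j + (if x = j then 1 else 0) := by
      conv_lhs => rw [← List.cons_head_tail hne]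
      rw [List.count_cons]
      simp
      rfl
    have hshow : (∀ r : Prop, (∑ k, L.count (j, k) = ∑ k, L.count (k, j) → r) →
        True) := fun _ _ => trivial
    rcases eq_or_ne j x with hjx | hjx
    · right
      refine ⟨by rw [hjx, hx], ?_⟩
      left
      have hyj : ¬ (y = j) := by rw [hjx]; exact fun h => hxy h.symm
      rw [if_neg hyj] at hA
      rw [if_pos hjx.symm] at hB
      show ∑ k, L.count (j, k) = (∑ k, L.count (k, j)) + 1
      rw [hf, hg]
      omega
    · rcases eq_or_ne j y with hjy | hjy
      · right
        refine ⟨by rw [hjy, hy], ?_⟩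
        right
        rw [if_pos hjy.symm] at hA
        rw [if_neg (fun h => hjx h.symm)] at hB
        show ∑ k, L.count (k, j) = (∑ k, L.count (j, k)) + 1
        rw [hf, hg]
        omega
      · left
        rw [if_neg (fun h => hjy h.symm)] at hA
        rw [if_neg (fun h => hjx h.symm)] at hB
        show ∑ k, L.count (j, k) = ∑ k, L.count (k, j)
        rw [hf, hg]
        omega
  · have : ∑ j, ∑ k, L.count (j, k) = l.length - 1 := by
      have e : ∀ j, ∑ k, L.count (j, k) = l.dropLast.count j := fun j => by
        rw [sum_count_fst, List.map_fst_zip (by simp)]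
      rw [Finset.sum_congr rfl fun j _ => e j, sum_count_length, List.length_dropLast]
    show 0 < ∑ j, ∑ k, L.count (j, k)
    omega

lemma mem_cycleEdges (c : List (Fin m)) (hne : c ≠ []) :
    ∀ p : Fin m × Fin m, p ∈ c.zip (c.tail ++ [c.head hne]) →
      ∃ i, ∃ h : i < c.length, c.get ⟨i, h⟩ = p.1 ∧
        ((∃ h2 : i + 1 < c.length, c.get ⟨i + 1, h2⟩ = p.2) ∨
         (i + 1 = c.length ∧ c.get ⟨0, List.length_pos_iff.2 hne⟩ = p.2)) := by
  intro p hp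
  have hpos : 0 < c.length := List.length_pos_iff.2 hne
  have hlen2 : (c.tail ++ [c.head hne]).length = c.length := by
    simp only [List.length_append, List.length_tail, List.length_singleton]
    omega
  obtain ⟨i, hi, hget⟩ := List.getElem_of_mem hp
  have hin : i < c.length := by
    rw [List.length_zip, hlen2] at hi
    omega
  rw [List.getElem_zip] at hget
  have h1 : c.get ⟨i, hin⟩ = p.1 := by
    have := congrArg Prod.fst hget
    simpa [List.get_eq_getElem] using this
  have h2 := congrArg Prod.snd hget
  simp only at h2
  refine ⟨i, hin, h1, ?_⟩
  by_cases hcase : i < c.length - 1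
  · left
    refine ⟨by omega, ?_⟩
    rw [← h2, List.get_eq_getElem]
    rw [List.getElem_append_left (by simp only [List.length_tail]; omega),
      List.getElem_tail]
  · right
    have hieq : i + 1 = c.length := by omega
    refine ⟨hieq, ?_⟩
    rw [← h2, List.get_eq_getElem]
    rw [List.getElem_append_right (by simp only [List.length_tail]; omega)]
    simp only [List.length_tail]
    have h3 : i - (c.length - 1) = 0 := by omega
    simp only [h3]
    simp [List.head_eq_getElem]

lemma cycleF (D : Fin m → Fin m → ℕ) (hs : ∀ j k, D j k = D k j)
    (hone : ∀ a b, D a b ≤ 1)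
    (c : List (Fin m)) (hne : c ≠ []) (hnd : c.Nodup) (hlen : 3 ≤ c.length)
    (hch : c.Chain' (fun a b => 0 < D a b))
    (hwrap : 0 < D (c.getLast hne) (c.head hne)) :
    TrailGoal D := by
  classical
  set L := c.zip (c.tail ++ [c.head hne]) with hLdef
  have hpos : 0 < c.length := List.length_pos_iff.2 hne
  have hlen2 : (c.tail ++ [c.head hne]).length = c.length := by
    simp only [List.length_append, List.length_tail, List.length_singleton]
    omega
  have hadj : ∀ p ∈ L, 0 < D p.1 p.2 := by
    intro p hp
    obtain ⟨i, hi, h1, hrest⟩ := mem_cycleEdges c hne p hp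
    rcases hrest with ⟨h2, he⟩ | ⟨hie, he⟩
    · have := List.isChain_iff_getElem.1 hch i (by omega)
      simp only [List.get_eq_getElem] at h1 he
      rwa [h1, he] at this
    · have hg1 : c.get ⟨i, hi⟩ = c.getLast hne := by
        rw [List.getLast_eq_getElem, List.get_eq_getElem]
        have hieq' : i = c.length - 1 := by omega
        subst hieq'
        rfl
      have hg2 : c.get ⟨0, List.length_pos_iff.2 hne⟩ = c.head hne := by
        rw [List.head_eq_getElem, List.get_eq_getElem]
      rw [hg1] at h1
      rw [hg2] at he
      rw [← h1, ← he]
      exact hwrap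
  have hLnd : L.Nodup := by
    apply List.Nodup.of_map Prod.fst
    rw [List.map_fst_zip (le_of_eq hlen2.symm)]
    exact hnd
  have hrev : ∀ a b, (a, b) ∈ L → (b, a) ∈ L → False := by
    intro a b hab hba
    obtain ⟨i, hi, hi1, hirest⟩ := mem_cycleEdges c hne _ hab
    obtain ⟨j, hj, hj1, hjrest⟩ := mem_cycleEdges c hne _ hba
    simp only at hi1 hj1
    have inj : ∀ (i1 i2 : ℕ) (h1 : i1 < c.length) (h2 : i2 < c.length),
        c.get ⟨i1, h1⟩ = c.get ⟨i2, h2⟩ → i1 = i2 := by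
      intro i1 i2 h1 h2 he
      simp only [List.get_eq_getElem] at he
      rwa [hnd.getElem_inj_iff] at he
    rcases hirest with ⟨hi2, hie⟩ | ⟨hieq, hie⟩ <;>
      rcases hjrest with ⟨hj2, hje⟩ | ⟨hjeq, hje⟩
    · -- c[i+1] = b = c[j], c[j+1] = a = c[i]
      have e1 := inj _ _ hi2 hj (by rw [hie, ← hj1])
      have e2 := inj _ _ hj2 hi (by rw [hje, ← hi1])
      omega
    · -- c[i+1]=b=c[j], c[0]=a=c[i]
      have e1 := inj _ _ hi2 hj (by rw [hie, ← hj1])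
      have e2 := inj _ _ (by omega : (0:ℕ) < c.length) hi (by rw [hje, ← hi1])
      omega
    · have e1 := inj _ _ hj2 hi (by rw [hje, ← hi1])
      have e2 := inj _ _ (by omega : (0:ℕ) < c.length) hj (by rw [hie, ← hj1])
      omega
    · have e0 : i = j := by omega
      have e1 := inj _ _ (by omega : (0:ℕ) < c.length) hj (by rw [hie, ← hj1])
      omega
  refine ⟨fun a b => L.count (a, b), countF_le D hs hone L hadj hLnd hrev, ?_, ?_⟩
  · intro j
    left
    show ∑ k, L.count (j, k) = ∑ k, L.count (k, j)
    have hf : ∑ k, L.count (j, k) = c.count j := by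
      rw [sum_count_fst, List.map_fst_zip (le_of_eq hlen2.symm)]
    have hg : ∑ k, L.count (k, j) = (c.tail ++ [c.head hne]).count j := by
      rw [sum_count_snd, List.map_snd_zip (le_of_eq hlen2)]
    have hc : c.count j = c.tail.count j + (if c.head hne = j then 1 else 0) := by
      conv_lhs => rw [← List.cons_head_tail hne]
      rw [List.count_cons]
      simp
    rw [hf, hg, List.count_append, List.count_singleton', hc]
  · show 0 < ∑ j, ∑ k, L.count (j, k)
    have e : ∀ j, ∑ k, L.count (j, k) = c.count j := fun j => by
      rw [sum_count_fst, List.map_fst_zip (le_of_eq hlen2.symm)]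
    rw [Finset.sum_congr rfl fun j _ => e j, sum_count_length]
    omega

lemma getLast_eq_append {α : Type*} {l s c : List α} (h : l = s ++ c) (hc : c ≠ [])
    (hne : l ≠ []) : l.getLast hne = c.getLast hc := by
  subst h
  exact List.getLast_append_right hc

lemma head_eq_append {α : Type*} {l c t : List α} (h : l = c ++ t) (hc : c ≠ [])
    (hne : l ≠ []) : l.head hne = c.head hc := by
  subst h
  exact List.head_append_of_ne_nil hc

lemma terminal (D : Fin m → Fin m → ℕ) (hs : ∀ j k, D j k = D k j)
    (hd : ∀ j, D j j = 0) (hone : ∀ a b, D a b ≤ 1)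
    (l : List (Fin m)) (hne : l ≠ []) (hnd : l.Nodup) (hlen : 2 ≤ l.length)
    (hch : l.Chain' (fun a b => 0 < D a b))
    (hy : ∀ w, 0 < D (l.getLast hne) w → w ∈ l)
    (hx : ∀ w, 0 < D (l.head hne) w → w ∈ l) :
    TrailGoal D := by
  classical
  set x := l.head hne with hxdef
  set y := l.getLast hne with hydef
  have htne : l.tail ≠ [] := by
    intro h
    have := congrArg List.length h
    simp at this
    omega
  have hdne : l.dropLast ≠ [] := by
    intro h
    have := congrArg List.length h
    simp at this
    omega
  set p := l.dropLast.getLast hdne with hpdef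
  set q := l.tail.head htne with hqdef
  -- last two elements of l are adjacent
  have hFp : 0 < D p y := by
    have hsuf : [p, y] <:+ l := by
      have e1 : l.dropLast.dropLast ++ [p] = l.dropLast :=
        List.dropLast_append_getLast hdne
      have e2 : l.dropLast ++ [y] = l := List.dropLast_append_getLast hne
      refine ⟨l.dropLast.dropLast, ?_⟩
      rw [← e2, ← e1]
      simp
    have := hch.suffix hsuf
    simpa using this
  have hFq : 0 < D x q := by
    have hpre : [x, q] <+: l := by
      have e1 : x :: l.tail = l := List.cons_head_tail hne
      have e2 : q :: l.tail.tail = l.tail := List.cons_head_tail htne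
      refine ⟨l.tail.tail, ?_⟩
      rw [← e1, ← e2]
      simp
    have := hch.prefix hpre
    simpa using this
  by_cases hcy : ∃ w, 0 < D y w ∧ w ≠ p
  · -- cycle through the tail end
    obtain ⟨w, hw, hwp⟩ := hcy
    have hwy : w ≠ y := by
      intro h
      rw [h] at hw
      rw [hd y] at hw
      omega
    obtain ⟨s, t, hlst⟩ := List.append_of_mem (hy w hw)
    set c : List (Fin m) := w :: t with hcdef
    have hcne : c ≠ [] := by simp [hcdef]
    have hsuf : c <:+ l := ⟨s, hlst.symm⟩
    have hcnd : c.Nodup := hsuf.sublist.nodup hnd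
    have hcch : c.Chain' (fun a b => 0 < D a b) := hch.suffix hsuf
    have hclast : c.getLast hcne = y :=
      (getLast_eq_append hlst hcne hne).symm
    have hchead : c.head hcne = w := rfl
    have hclen : 3 ≤ c.length := by
      rcases t with _ | ⟨r, _ | ⟨r2, t2⟩⟩
      · exfalso
        apply hwy
        rw [← hclast]
        rfl
      · exfalso
        apply hwp
        have hyr : y = r := by rw [← hclast]; rfl
        have hdl : l.dropLast = s ++ [w] := by
          rw [hlst, hcdef, ← hyr]
          have h2 : s ++ [w, y] = (s ++ [w]) ++ [y] := by simp
          rw [show w :: [y] = [w, y] from rfl, h2, List.dropLast_concat]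
        have h4 := getLast_eq_append hdl (by simp) hdne
        exact h4.symm
      · simp [hcdef]
        try omega
    have hwrap : 0 < D (c.getLast hcne) (c.head hcne) := by
      rw [hclast, hchead]
      exact hw
    exact cycleF D hs hone c hcne hcnd hclen hcch hwrap
  · push_neg at hcy
    have hrowy : ∑ k, D y k = 1 := by
      have h1 : ∀ k ∈ Finset.univ, k ≠ p → D y k = 0 := by
        intro k _ hk
        by_contra hne0
        exact hk (hcy k (by omega))
      rw [Finset.sum_eq_single p (fun k _ hk => h1 k (Finset.mem_univ k) hk)
        (fun h => absurd (Finset.mem_univ p) h)]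
      have := hone y p
      have := hs y p
      omega
    by_cases hcx : ∃ w, 0 < D x w ∧ w ≠ q
    · obtain ⟨w, hw, hwq⟩ := hcx
      have hwx : w ≠ x := by
        intro h
        rw [h, hd x] at hw
        omega
      obtain ⟨s, t, hlst⟩ := List.append_of_mem (hx w hw)
      set c : List (Fin m) := s ++ [w] with hcdef
      have hcne : c ≠ [] := by simp [hcdef]
      have hpre : c <+: l := by
        refine ⟨t, ?_⟩
        rw [hlst, hcdef]
        simp
      have hcnd : c.Nodup := hpre.sublist.nodup hnd
      have hcch : c.Chain' (fun a b => 0 < D a b) := hch.prefix hpre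
      have hchead : c.head hcne = x := by
        have hl2 : l = c ++ t := by rw [hlst, hcdef]; simp
        exact (head_eq_append hl2 hcne hne).symm
      have hclast : c.getLast hcne = w := List.getLast_concat (l := s)
      have hclen : 3 ≤ c.length := by
        rcases s with _ | ⟨r, _ | ⟨r2, s2⟩⟩
        · exfalso
          apply hwx
          rw [← hchead]
          rfl
        · exfalso
          apply hwq
          have htl : l.tail = [w] ++ t := by rw [hlst]; rfl
          have h3 := head_eq_append htl (by simp) htne
          rw [hqdef, h3]
          rfl
        · simp [hcdef]
          try omega
      have hwrap : 0 < D (c.getLast hcne) (c.head hcne) := by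
        rw [hclast, hchead, ← hs x w]
        exact hw
      exact cycleF D hs hone c hcne hcnd hclen hcch hwrap
    · push_neg at hcx
      have hrowx : ∑ k, D x k = 1 := by
        have h1 : ∀ k ∈ Finset.univ, k ≠ q → D x k = 0 := by
          intro k _ hk
          by_contra hne0
          exact hk (hcx k (by omega))
        rw [Finset.sum_eq_single q (fun k _ hk => h1 k (Finset.mem_univ k) hk)
          (fun h => absurd (Finset.mem_univ q) h)]
        have := hone x q
        omega
      exact pathF D hs hone l hne hnd hlen hch hrowx hrowy

def Good (D : Fin m → Fin m → ℕ) : Prop :=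
  ∃ D' : Fin m → Fin m → ℕ,
    (∀ j k, D' j k + D' k j = D j k) ∧
    ∀ j, (∑ k, D j k) / 2 ≤ ∑ k, D' j k ∧ ∑ k, D' j k ≤ ((∑ k, D j k) + 1) / 2

lemma step (D F : Fin m → Fin m → ℕ)
    (hF : ∀ j k, F j k + F k j ≤ D j k)
    (hbal : ∀ j, (∑ k, F j k = ∑ k, F k j) ∨
      ((∑ k, D j k) % 2 = 1 ∧
        (∑ k, F j k = (∑ k, F k j) + 1 ∨ ∑ k, F k j = (∑ k, F j k) + 1)))
    (hE : Good (fun j k => D j k - F j k - F k j)) : Good D := by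
  obtain ⟨E', hsplit, hrow⟩ := hE
  refine ⟨fun j k => E' j k + F j k, ?_, ?_⟩
  · intro j k
    have h1 : E' j k + E' k j = D j k - F j k - F k j := hsplit j k
    have h2 := hF j k
    show E' j k + F j k + (E' k j + F k j) = D j k
    omega
  · intro j
    have hrowE : (∑ k, (D j k - F j k - F k j)) + ((∑ k, F j k) + (∑ k, F k j))
        = ∑ k, D j k := by
      rw [← Finset.sum_add_distrib, ← Finset.sum_add_distrib]
      exact Finset.sum_congr rfl fun k _ => by have := hF j k; omega
    have hr : (∑ k, (D j k - F j k - F k j)) / 2 ≤ ∑ k, E' j k ∧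
        ∑ k, E' j k ≤ ((∑ k, (D j k - F j k - F k j)) + 1) / 2 := hrow j
    have hb := hbal j
    have hsum : ∑ k, (E' j k + F j k) = (∑ k, E' j k) + ∑ k, F j k :=
      Finset.sum_add_distrib
    show (∑ k, D j k) / 2 ≤ ∑ k, (E' j k + F j k) ∧
        ∑ k, (E' j k + F j k) ≤ ((∑ k, D j k) + 1) / 2
    omega

lemma find (D : Fin m → Fin m → ℕ) (hs : ∀ j k, D j k = D k j)
    (hd : ∀ j, D j j = 0) (hone : ∀ a b, D a b ≤ 1) :
    ∀ (fuel : ℕ) (l : List (Fin m)) (hne : l ≠ []), m ≤ fuel + l.length →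
      l.Nodup → l.Chain' (fun a b => 0 < D a b) → 2 ≤ l.length → TrailGoal D := by
  intro fuel
  induction fuel with
  | zero =>
    intro l hne hfl hnd hch hlen
    have hcard : l.length ≤ m := by simpa using hnd.length_le_card
    have hall : ∀ w : Fin m, w ∈ l := by
      intro w
      have h1 : l.toFinset.card = l.length := List.toFinset_card_of_nodup hnd
      have h2 : l.toFinset = Finset.univ := by
        apply Finset.eq_univ_of_card
        rw [h1]
        simp only [Fintype.card_fin]
        omega
      rw [← List.mem_toFinset, h2]
      exact Finset.mem_univ w
    exact terminal D hs hd hone l hne hnd hlen hch (fun w _ => hall w) (fun w _ => hall w)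
  | succ fuel ih =>
    intro l hne hfl hnd hch hlen
    by_cases hext : ∃ w, 0 < D (l.getLast hne) w ∧ w ∉ l
    · obtain ⟨w, hw, hwl⟩ := hext
      refine ih (l ++ [w]) (by simp) ?_ ?_ ?_ ?_
      · simp only [List.length_append, List.length_singleton]
        omega
      · rw [List.nodup_append]
        exact ⟨hnd, List.nodup_singleton w, by
          intro a ha b hb hab
          simp only [List.mem_singleton] at hb
          subst hb
          subst hab
          exact hwl ha⟩
      · show List.IsChain _ (l ++ [w])
        rw [List.isChain_append]
        refine ⟨hch, List.isChain_singleton w, ?_⟩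
        intro a ha b hb
        rw [List.getLast?_eq_getLast hne] at ha
        simp only [Option.mem_def, Option.some.injEq] at ha
        simp only [List.head?_cons, Option.mem_def, Option.some.injEq] at hb
        subst ha
        subst hb
        exact hw
      · simp only [List.length_append, List.length_singleton]
        omega
    · by_cases hext2 : ∃ w, 0 < D (l.head hne) w ∧ w ∉ l
      · obtain ⟨w, hw, hwl⟩ := hext2
        refine ih (w :: l) (by simp) ?_ ?_ ?_ ?_
        · simp only [List.length_cons]
          omega
        · rw [List.nodup_cons]
          exact ⟨hwl, hnd⟩
        · show List.IsChain _ (w :: l)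
          rw [List.isChain_cons]
          refine ⟨?_, hch⟩
          intro b hb
          rw [List.head?_eq_head hne] at hb
          simp only [Option.mem_def, Option.some.injEq] at hb
          subst hb
          rw [← hs]
          exact hw
        · simp only [List.length_cons]
          omega
      · push_neg at hext hext2
        exact terminal D hs hd hone l hne hnd hlen hch
          (fun w h => hext w h) (fun w h => hext2 w h)

lemma main : ∀ (T : ℕ) (D : Fin m → Fin m → ℕ), (∑ j, ∑ k, D j k) ≤ T →
    (∀ j k, D j k = D k j) → (∀ j, D j j = 0) → Good D := by
  intro T
  induction T using Nat.strong_induction_on with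
  | _ T ih =>
    intro D hT hs hd
    by_cases h0 : ∑ j, ∑ k, D j k = 0
    · have hz : ∀ j k, D j k = 0 := by
        intro j k
        have h1 := (Finset.sum_eq_zero_iff.1 h0) j (Finset.mem_univ j)
        exact (Finset.sum_eq_zero_iff.1 h1) k (Finset.mem_univ k)
      refine ⟨fun _ _ => 0, fun j k => by simp [hz], fun j => by simp [hz]⟩
    · have useTrail : TrailGoal D → Good D := by
        rintro ⟨F, hF, hbal, hpos⟩
        apply step D F hF hbal
        have hEtot : (∑ j, ∑ k, (D j k - F j k - F k j)) + 2 * (∑ j, ∑ k, F j k)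
            = ∑ j, ∑ k, D j k := by
          have hFt : ∑ j, ∑ k, F k j = ∑ j, ∑ k, F j k := Finset.sum_comm
          have e : ∀ j, (∑ k, (D j k - F j k - F k j)) + ((∑ k, F j k) + (∑ k, F k j))
              = ∑ k, D j k := by
            intro j
            rw [← Finset.sum_add_distrib, ← Finset.sum_add_distrib]
            exact Finset.sum_congr rfl fun k _ => by have := hF j k; omega
          have := Finset.sum_congr rfl fun j (_ : j ∈ Finset.univ) => (e j)
          rw [Finset.sum_add_distrib, Finset.sum_add_distrib] at this
          omega
        apply ih (T - 1) (by omega) _ (by omega)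
        · intro j k
          have h1 := hF j k
          have h2 := hs j k
          show D j k - F j k - F k j = D k j - F k j - F j k
          omega
        · intro j
          have h1 := hF j j
          have h2 := hd j
          show D j j - F j j - F j j = 0
          omega
      by_cases hbig : ∃ a b, 2 ≤ D a b
      · obtain ⟨a, b, hab⟩ := hbig
        have hne : a ≠ b := fun h => by rw [h, hd b] at hab; omega
        apply useTrail
        set F : Fin m → Fin m → ℕ :=
          fun j k => if (j = a ∧ k = b) ∨ (j = b ∧ k = a) then 1 else 0 with hFdef
        have hsymF : ∀ j k, F j k = F k j := by
          intro j k
          rw [hFdef]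
          simp only
          refine if_congr ?_ rfl rfl
          constructor <;> rintro (⟨rfl, rfl⟩ | ⟨rfl, rfl⟩) <;> simp
        refine ⟨F, ?_, ?_, ?_⟩
        · intro j k
          have hFv : F j k ≤ 1 := by rw [hFdef]; simp only; split <;> omega
          have h2 : F j k = 1 → 2 ≤ D j k := by
            intro h
            rw [hFdef] at h
            simp only at h
            by_cases hc : (j = a ∧ k = b) ∨ (j = b ∧ k = a)
            · rcases hc with ⟨h5, h6⟩ | ⟨h5, h6⟩ <;> rw [h5, h6]
              · exact hab
              · rw [← hs a b]
                exact hab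
            · rw [if_neg hc] at h
              omega
          have h3 := hsymF j k
          interval_cases h4 : F j k
          · omega
          · have := h2 rfl
            omega
        · intro j
          left
          exact Finset.sum_congr rfl fun k _ => hsymF j k
        · have hFab : F a b = 1 := by
            rw [hFdef]
            simp
          have h1 : F a b ≤ ∑ k, F a k :=
            Finset.single_le_sum (f := fun k => F a k) (fun k _ => Nat.zero_le _)
              (Finset.mem_univ b)
          have h2 : (∑ k, F a k) ≤ ∑ j, ∑ k, F j k :=
            Finset.single_le_sum (f := fun j => ∑ k, F j k) (fun j _ => Nat.zero_le _)
              (Finset.mem_univ a)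
          omega
      · push_neg at hbig
        have hone : ∀ a b, D a b ≤ 1 := fun a b => by have := hbig a b; omega
        have hex : ∃ a b, 0 < D a b := by
          by_contra hno
          push_neg at hno
          apply h0
          exact Finset.sum_eq_zero fun j _ => Finset.sum_eq_zero fun k _ => by
            have := hno j k
            omega
        obtain ⟨a, b, hab⟩ := hex
        have hne : a ≠ b := fun h => by rw [h, hd b] at hab; omega
        apply useTrail
        exact find D hs hd hone m [a, b] (by simp) (by simp) (by simp [hne])
          (List.isChain_pair.2 hab) (by simp)
    

end Stmt6Aux


/-- Every symmetric demand of a bidirectional Clos network can be split into a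
directed demand whose every row sum and every column sum is within the floor and ceiling of
half the corresponding sum of `D`. -/
theorem stmt_6 (m : ℕ) (hm : 0 < m)
    (D : Fin m → Fin m → ℕ)
    (hDsymm : ∀ j k, D j k = D k j)
    (hDdiag : ∀ j, D j j = 0) :
    ∃ D' : Fin m → Fin m → ℕ,
      (∀ j k, D' j k + D' k j = D j k) ∧
      (∀ j, (∑ k, D j k) / 2 ≤ ∑ k, D' j k ∧
            ∑ k, D' j k ≤ ((∑ k, D j k) + 1) / 2) ∧
      (∀ k, (∑ j, D j k) / 2 ≤ ∑ j, D' j k ∧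
            ∑ j, D' j k ≤ ((∑ j, D j k) + 1) / 2) := by
  obtain ⟨D', hsplit, hrows⟩ :=
    Stmt6Aux.main (∑ j, ∑ k, D j k) D le_rfl hDsymm hDdiag
  refine ⟨D', hsplit, hrows, ?_⟩
  intro k
  have h1 : (∑ j, D' j k) + (∑ j, D' k j) = ∑ j, D j k := by
    rw [← Finset.sum_add_distrib]
    exact Finset.sum_congr rfl fun j _ => hsplit j k
  have h2 : ∑ j, D j k = ∑ j, D k j :=
    Finset.sum_congr rfl fun j _ => hDsymm j k
  have h3 := hrows k
  omega
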